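/- Let H = (V,E) be an n-uniform clique with χ(H) = 3, B = {v ∈ V : deg v > |E|/n²}, and t ∈ {1,…,n}. Then either |E| ≤ t·n^{n-1}, or every edge e ∈ E satisfies |e ∩ B| ≥ t. -/

import Mathlib

lemma star_bound {V : Type*} [DecidableEq V] {n : ℕ} {E : Finset (Finset V)}
    (huniform : ∀ e ∈ E, e.card = n)
    (hclique : ∀ e ∈ E, ∀ f ∈ E, (e ∩ f).Nonempty)
    (hno2 : ¬ ∃ c : V → Fin 2, ∀ e ∈ E, ∃ u ∈ e, ∃ v ∈ e, c u ≠ c v)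
    (hn : 1 ≤ n) :
    ∀ m : ℕ, ∀ W : Finset V, W.Nonempty → n ≤ W.card + m →
      (E.filter (fun f => W ⊆ f)).card ≤ n ^ m := by
  intro m
  induction m with
  | zero =>
    intro W hW hle
    rw [pow_zero]
    apply Finset.card_le_one.mpr
    intro a ha b hb
    simp only [Finset.mem_filter] at ha hb
    have hA : W = a := Finset.eq_of_subset_of_card_le ha.2
      (by rw [huniform a ha.1]; simpa using hle)
    have hB : W = b := Finset.eq_of_subset_of_card_le hb.2
      (by rw [huniform b hb.1]; simpa using hle)
    rw [← hA, ← hB]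
  | succ m ih =>
    intro W hW hle
    by_cases h : n ≤ W.card + m
    · exact (ih W hW h).trans (Nat.pow_le_pow_right hn (Nat.le_succ m))
    · push_neg at h
      set c : V → Fin 2 := fun v => if v ∈ W then 0 else 1 with hc
      have hPc : ¬ ∀ e ∈ E, ∃ u ∈ e, ∃ v ∈ e, c u ≠ c v := fun hh => hno2 ⟨c, hh⟩
      push_neg at hPc
      obtain ⟨e, he, hmono⟩ := hPc
      have hecard : e.card = n := huniform e he
      have hx : ∃ x ∈ e, x ∉ W := by
        by_contra hcon
        push_neg at hcon
        have : e ⊆ W := hcon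
        have := Finset.card_le_card this
        omega
      obtain ⟨x, hxe, hxW⟩ := hx
      have hdisj : ∀ y ∈ e, y ∉ W := by
        intro y hy hyW
        have := hmono y hy x hxe
        simp [hc, hyW, hxW] at this
      have hsub : E.filter (fun f => W ⊆ f) ⊆
          e.biUnion (fun z => E.filter (fun f => insert z W ⊆ f)) := by
        intro f hf
        simp only [Finset.mem_filter] at hf
        obtain ⟨z, hz⟩ := hclique f hf.1 e he
        rw [Finset.mem_inter] at hz
        refine Finset.mem_biUnion.mpr ⟨z, hz.2, ?_⟩
        simp only [Finset.mem_filter]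
        exact ⟨hf.1, Finset.insert_subset hz.1 hf.2⟩
      calc (E.filter (fun f => W ⊆ f)).card
          ≤ (e.biUnion (fun z => E.filter (fun f => insert z W ⊆ f))).card :=
            Finset.card_le_card hsub
        _ ≤ ∑ z ∈ e, (E.filter (fun f => insert z W ⊆ f)).card := Finset.card_biUnion_le
        _ ≤ ∑ z ∈ e, n ^ m := by
            apply Finset.sum_le_sum
            intro z hz
            apply ih (insert z W) ⟨z, Finset.mem_insert_self z W⟩
            rw [Finset.card_insert_of_notMem (hdisj z hz)]
            omega
        _ = n * n ^ m := by rw [Finset.sum_const, hecard, smul_eq_mul]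
        _ = n ^ (m + 1) := by ring

theorem few_edges_or_big_intersection {V : Type*} [DecidableEq V] (n t : ℕ)
    (E : Finset (Finset V))
    (huniform : ∀ e ∈ E, e.card = n)
    (hclique : ∀ e ∈ E, ∀ f ∈ E, (e ∩ f).Nonempty)
    (hno2 : ¬ ∃ c : V → Fin 2, ∀ e ∈ E, ∃ u ∈ e, ∃ v ∈ e, c u ≠ c v)
    (hyes3 : ∃ c : V → Fin 3, ∀ e ∈ E, ∃ u ∈ e, ∃ v ∈ e, c u ≠ c v)
    (ht1 : 1 ≤ t) (htn : t ≤ n) :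
    E.card ≤ t * n ^ (n - 1) ∨
      ∀ e ∈ E, t ≤ (e.filter
        (fun v => ((E.filter (fun f => v ∈ f)).card : ℝ) > (E.card : ℝ) / (n : ℝ) ^ 2)).card := by
  have hn1 : 1 ≤ n := le_trans ht1 htn
  by_cases hn2 : n = 1
  · left
    subst hn2
    have hcard1 : E.card ≤ 1 := by
      apply Finset.card_le_one.mpr
      intro a ha b hb
      obtain ⟨z, hz⟩ := hclique a ha b hb
      rw [Finset.mem_inter] at hz
      have ha1 := huniform a ha
      have hb1 := huniform b hb
      rw [Finset.card_eq_one] at ha1 hb1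
      obtain ⟨x, rfl⟩ := ha1
      obtain ⟨y, rfl⟩ := hb1
      simp only [Finset.mem_singleton] at hz
      rw [← hz.1, ← hz.2]
    simpa using hcard1.trans ht1
  · have hn2' : 2 ≤ n := by omega
    by_cases hright : ∀ e ∈ E, t ≤ (e.filter
        (fun v => ((E.filter (fun f => v ∈ f)).card : ℝ) > (E.card : ℝ) / (n : ℝ) ^ 2)).card
    · exact Or.inr hright
    · left
      push_neg at hright
      obtain ⟨e, he, hlt⟩ := hright
      set P : V → Prop := fun v => ((E.filter (fun f => v ∈ f)).card : ℝ) > (E.card : ℝ) / (n : ℝ) ^ 2 with hP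
      have hcardP : (e.filter P).card < t := hlt
      set D : V → ℕ := fun v => (E.filter (fun f => v ∈ f)).card with hD
      have hecard : e.card = n := huniform e he
      -- E.card ≤ ∑ v in e, D v
      have hcount : E.card ≤ ∑ v ∈ e, D v := by
        calc E.card ≤ (e.biUnion (fun v => E.filter (fun f => v ∈ f))).card := by
              apply Finset.card_le_card
              intro f hf
              obtain ⟨z, hz⟩ := hclique f hf e he
              rw [Finset.mem_inter] at hz
              exact Finset.mem_biUnion.mpr ⟨z, hz.2, Finset.mem_filter.mpr ⟨hf, hz.1⟩⟩
          _ ≤ ∑ v ∈ e, D v := Finset.card_biUnion_le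
      -- degree bound for v ∈ B
      have hdeg : ∀ v : V, D v ≤ n ^ (n - 1) := by
        intro v
        have := star_bound huniform hclique hno2 hn1 (n - 1) {v}
          (Finset.singleton_nonempty v) (by simp; omega)
        simp only [Finset.singleton_subset_iff] at this
        exact this
      -- split the sum
      have hsplit : ∑ v ∈ e, D v =
          ∑ v ∈ e.filter P, D v + ∑ v ∈ e.filter (fun v => ¬ P v), D v :=
        (Finset.sum_filter_add_sum_filter_not e P D).symm
      have hBsum : ∑ v ∈ e.filter P, D v ≤ (t - 1) * n ^ (n - 1) := by
        calc ∑ v ∈ e.filter P, D v ≤ ∑ v ∈ e.filter P, n ^ (n - 1) :=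
              Finset.sum_le_sum (fun v _ => hdeg v)
          _ = (e.filter P).card * n ^ (n - 1) := by rw [Finset.sum_const, smul_eq_mul]
          _ ≤ (t - 1) * n ^ (n - 1) := by
              apply Nat.mul_le_mul_right
              omega
      have hSsum : (∑ v ∈ e.filter (fun v => ¬ P v), (D v : ℝ)) ≤
          n * ((E.card : ℝ) / (n : ℝ) ^ 2) := by
        calc (∑ v ∈ e.filter (fun v => ¬ P v), (D v : ℝ))
            ≤ ∑ v ∈ e.filter (fun v => ¬ P v), ((E.card : ℝ) / (n : ℝ) ^ 2) := by
              apply Finset.sum_le_sum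
              intro v hv
              have := (Finset.mem_filter.mp hv).2
              simp only [hP, not_lt] at this
              exact this
          _ = (e.filter (fun v => ¬ P v)).card * ((E.card : ℝ) / (n : ℝ) ^ 2) := by
              rw [Finset.sum_const]; simp
          _ ≤ n * ((E.card : ℝ) / (n : ℝ) ^ 2) := by
              apply mul_le_mul_of_nonneg_right
              · exact_mod_cast (Finset.card_filter_le e _).trans_eq hecard
              · positivity
      -- combine in ℝ
      have hmain : (E.card : ℝ) ≤ ((t - 1) * n ^ (n - 1) : ℕ) + n * ((E.card : ℝ) / (n : ℝ) ^ 2) := by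
        have h1 : (E.card : ℝ) ≤ ∑ v ∈ e, (D v : ℝ) := by exact_mod_cast hcount
        have h2 : (∑ v ∈ e, (D v : ℝ)) =
            (∑ v ∈ e.filter P, (D v : ℝ)) + ∑ v ∈ e.filter (fun v => ¬ P v), (D v : ℝ) := by
          exact_mod_cast congrArg (Nat.cast : ℕ → ℝ) hsplit
        have h3 : (∑ v ∈ e.filter P, (D v : ℝ)) ≤ ((t - 1) * n ^ (n - 1) : ℕ) := by
          exact_mod_cast hBsum
        linarith
      -- arithmetic
      set N : ℝ := (n : ℝ) with hN
      set X : ℝ := (n : ℝ) ^ (n - 1) with hX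
      have hNX : N * X = (n : ℝ) ^ n := by
        rw [hN, hX, ← pow_succ']
        congr 1
        omega
      have hN2 : (2 : ℝ) ≤ N := by rw [hN]; exact_mod_cast hn2'
      have hX0 : (0 : ℝ) ≤ X := by positivity
      have hT : (t : ℝ) ≤ N := by rw [hN]; exact_mod_cast htn
      have hT1 : (1 : ℝ) ≤ (t : ℝ) := by exact_mod_cast ht1
      have hE0 : (0 : ℝ) ≤ (E.card : ℝ) := by positivity
      have hcast : (((t - 1) * n ^ (n - 1) : ℕ) : ℝ) = ((t : ℝ) - 1) * X := by
        push_cast [hX]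
        rw [Nat.cast_sub ht1]
        push_cast
        ring
      rw [hcast] at hmain
      have hdiv : N * ((E.card : ℝ) / N ^ 2) = (E.card : ℝ) / N := by
        field_simp
      rw [hN] at hmain
      rw [hdiv] at hmain
      -- hmain : E.card ≤ (t-1)*X + E.card / N
      have hgoal : (E.card : ℝ) ≤ (t : ℝ) * X := by
        have hNpos : (0 : ℝ) < N := by linarith
        have hmul : (E.card : ℝ) * N ≤ (((t : ℝ) - 1) * X + (E.card : ℝ) / N) * N :=
          mul_le_mul_of_nonneg_right hmain (le_of_lt hNpos)
        rw [add_mul, div_mul_cancel₀ _ (ne_of_gt hNpos)] at hmul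
        nlinarith [mul_nonneg hX0 (sub_nonneg.mpr hT), mul_nonneg hX0 (sub_nonneg.mpr hT1)]
      rw [hX] at hgoal
      exact_mod_cast hgoal
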